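/- Pairwise precision bound for sampled ranking: let P_1, P_2 be two tree patterns with exact scores S_1 = Σ_{r ∈ R} s_1(r) and S_2 = Σ_{r ∈ R} s_2(r) satisfying S_1 > S_2, where s_i(r) ∈ [0, M_r] for bounds M_r with Σ_r M_r ≤ S_1 + S_2. If each root r is independently sampled with probability ρ and Ŝ_i = Σ_{r sampled} s_i(r), then Pr[Ŝ_1 < Ŝ_2] ≤ exp( -2 ((S_1 - S_2)/(S_1 + S_2))² · ρ² ). -/

import Mathlib

open MeasureTheory ProbabilityTheory

lemma bernoulli_mgf_le (p : ℝ) (hp0 : 0 ≤ p) (hp1 : p ≤ 1) (u : ℝ) :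
    1 - p + p * Real.exp u ≤ Real.exp (p * u + u ^ 2 / 8) := by
  set D : ℝ → ℝ := fun x => 1 - p + p * Real.exp x with hDdef
  have hDpos : ∀ x, 0 < D x := by
    intro x
    show 0 < 1 - p + p * Real.exp x
    rcases le_or_gt (Real.exp x) 1 with h | h
    · nlinarith [Real.exp_pos x, mul_nonneg (sub_nonneg.2 hp1) (sub_nonneg.2 h)]
    · nlinarith [mul_nonneg hp0 (le_of_lt (sub_pos.2 h))]
  have hD : ∀ x, HasDerivAt D (p * Real.exp x) x := fun x =>
    ((Real.hasDerivAt_exp x).const_mul p).const_add (1 - p)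
  set g : ℝ → ℝ := fun x => p + x / 4 - p * Real.exp x / D x with hgdef
  have hg : ∀ x, HasDerivAt g (1 / 4 - p * Real.exp x * (1 - p) / (D x) ^ 2) x := by
    intro x
    have h1 : HasDerivAt (fun x : ℝ => p + x / 4) (1 / 4) x := by
      simpa using ((hasDerivAt_id x).div_const 4).const_add p
    have h2 : HasDerivAt (fun x => p * Real.exp x / D x)
        ((p * Real.exp x * D x - p * Real.exp x * (p * Real.exp x)) / (D x) ^ 2) x :=
      ((Real.hasDerivAt_exp x).const_mul p).div (hD x) (hDpos x).ne'
    have h3 := h1.sub h2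
    refine h3.congr_deriv ?_
    have hDx : D x = 1 - p + p * Real.exp x := rfl
    rw [hDx]
    ring
  have hg'nonneg : ∀ x, 0 ≤ 1 / 4 - p * Real.exp x * (1 - p) / (D x) ^ 2 := by
    intro x
    have hDx : D x = 1 - p + p * Real.exp x := rfl
    rw [sub_nonneg, hDx, div_le_iff₀ (by have h := hDpos x; rw [hDx] at h; exact pow_pos h 2)]
    nlinarith [sq_nonneg ((1 - p) - p * Real.exp x)]
  have hgmono : Monotone g :=
    monotone_of_deriv_nonneg (fun x => (hg x).differentiableAt)
      (fun x => by rw [(hg x).deriv]; exact hg'nonneg x)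
  have hD0 : D 0 = 1 := by simp [hDdef]
  have hg0 : g 0 = 0 := by simp [hgdef, hD0]
  set f : ℝ → ℝ := fun x => p * x + x ^ 2 / 8 - Real.log (D x) with hfdef
  have hf : ∀ x, HasDerivAt f (g x) x := by
    intro x
    have h1 : HasDerivAt (fun x : ℝ => p * x + x ^ 2 / 8) (p + x / 4) x := by
      have := ((hasDerivAt_id x).const_mul p).add ((hasDerivAt_pow 2 x).div_const 8)
      refine this.congr_deriv ?_
      ring
    have h2 : HasDerivAt (fun x => Real.log (D x)) (p * Real.exp x / D x) x :=
      (hD x).log (hDpos x).ne'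
    exact h1.sub h2
  have hf0 : f 0 = 0 := by simp [hfdef, hD0]
  have hfdiff : Differentiable ℝ f := fun x => (hf x).differentiableAt
  have key : 0 ≤ f u := by
    rcases le_total 0 u with h | h
    · have hmono : MonotoneOn f (Set.Ici 0) :=
        monotoneOn_of_deriv_nonneg (convex_Ici 0) hfdiff.continuous.continuousOn
          hfdiff.differentiableOn
          (fun x hx => by
            rw [(hf x).deriv, ← hg0]
            exact hgmono (le_of_lt (by simpa using hx)))
      have := hmono Set.self_mem_Ici (Set.mem_Ici.2 h) h
      linarith [hf0 ▸ this]
    · have hmono : AntitoneOn f (Set.Iic 0) :=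
        antitoneOn_of_deriv_nonpos (convex_Iic 0) hfdiff.continuous.continuousOn
          hfdiff.differentiableOn
          (fun x hx => by
            rw [(hf x).deriv, ← hg0]
            exact hgmono (le_of_lt (by simpa using hx)))
      have := hmono (Set.mem_Iic.2 h) Set.self_mem_Iic h
      linarith [hf0 ▸ this]
  have hlog : Real.log (D u) ≤ p * u + u ^ 2 / 8 := by
    have : f u = p * u + u ^ 2 / 8 - Real.log (D u) := rfl
    linarith [this ▸ key]
  calc 1 - p + p * Real.exp u = Real.exp (Real.log (D u)) := (Real.exp_log (hDpos u)).symm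
    _ ≤ Real.exp (p * u + u ^ 2 / 8) := Real.exp_le_exp.2 hlog

/-- Pairwise precision bound for sampled ranking.
Tree patterns `P_1, P_2` have exact scores `S_1 = Σ_r s_1(r)` and
`S_2 = Σ_r s_2(r)` with `S_1 > S_2`, where `0 ≤ s_i(r) ≤ M_r` and
`Σ_r M_r ≤ S_1 + S_2`. Each root `r` is sampled independently with
probability `ρ` (indicator `X r`), and `Ŝ_i(ω) = Σ_r X_r(ω) · s_i(r)`. Then
`Pr[Ŝ_1 < Ŝ_2] ≤ exp(-2 ((S_1 - S_2)/(S_1 + S_2))² ρ²)`. -/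
theorem sampled_ranking_pairwise_precision
    {Ω ι : Type} [MeasurableSpace Ω] [Fintype ι]
    (μ : Measure Ω) [IsProbabilityMeasure μ]
    (ρ : ℝ) (hρ : ρ ∈ Set.Ioc (0 : ℝ) 1)
    (X : ι → Ω → ℝ)
    (hX01 : ∀ r ω, X r ω = 0 ∨ X r ω = 1)
    (hXmeas : ∀ r, Measurable (X r))
    (hindep : iIndepFun X μ)
    (hXprob : ∀ r, μ {ω | X r ω = 1} = ENNReal.ofReal ρ)
    (s₁ s₂ : ι → ℝ) (hs₁ : ∀ r, 0 ≤ s₁ r) (hs₂ : ∀ r, 0 ≤ s₂ r)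
    (M : ι → ℝ) (hM₁ : ∀ r, s₁ r ≤ M r) (hM₂ : ∀ r, s₂ r ≤ M r)
    (hMsum : ∑ r : ι, M r ≤ (∑ r : ι, s₁ r) + ∑ r : ι, s₂ r)
    (hgt : (∑ r : ι, s₂ r) < ∑ r : ι, s₁ r) :
    (μ {ω | ∑ r : ι, X r ω * s₁ r < ∑ r : ι, X r ω * s₂ r}).toReal
      ≤ Real.exp (-2 *
          (((∑ r : ι, s₁ r) - ∑ r : ι, s₂ r) /
           ((∑ r : ι, s₁ r) + ∑ r : ι, s₂ r)) ^ 2 * ρ ^ 2) := by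
  obtain ⟨hρ0, hρ1⟩ := hρ
  set a : ι → ℝ := fun r => s₁ r - s₂ r with hadef
  set Δ : ℝ := (∑ r : ι, s₁ r) - ∑ r : ι, s₂ r with hΔdef
  set T : ℝ := (∑ r : ι, s₁ r) + ∑ r : ι, s₂ r with hTdef
  have hΔpos : 0 < Δ := sub_pos.2 hgt
  have hTpos : 0 < T := by
    have h2 : 0 ≤ ∑ r : ι, s₂ r := Finset.sum_nonneg fun r _ => hs₂ r
    have h1 : 0 ≤ ∑ r : ι, s₁ r := Finset.sum_nonneg fun r _ => hs₁ r
    have : (0:ℝ) < ∑ r : ι, s₁ r := lt_of_le_of_lt h2 hgt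
    linarith
  set t : ℝ := -(4 * ρ * Δ / T ^ 2) with htdef
  have ht : t ≤ 0 := by
    rw [htdef, neg_nonpos]
    positivity
  set Y : ι → Ω → ℝ := fun r ω => X r ω * a r with hYdef
  have hYmeas : ∀ r, Measurable (Y r) := fun r => (hXmeas r).mul_const _
  have hYindep : iIndepFun Y μ :=
    hindep.comp (fun r x => x * a r) (fun r => measurable_id.mul_const _)
  -- pointwise identity
  have hpt : ∀ r (ω : Ω), Real.exp (t * Y r ω) = 1 + (Real.exp (t * a r) - 1) * X r ω := by
    intro r ω
    rcases hX01 r ω with h | h <;> simp [hYdef, h] <;> ring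
  -- integrability of indicators
  have hsmeas : ∀ r, MeasurableSet {ω | X r ω = 1} := fun r =>
    hXmeas r (measurableSet_singleton 1)
  have hXind : ∀ r, X r = Set.indicator {ω | X r ω = 1} (fun _ => (1:ℝ)) := by
    intro r
    funext ω
    rcases hX01 r ω with h | h
    · rw [h, Set.indicator_of_notMem]
      simp [Set.mem_setOf_eq, h]
    · rw [h, Set.indicator_of_mem]
      exact h
  have hXint : ∀ r, Integrable (X r) μ := by
    intro r
    rw [hXind r]
    exact (integrable_const (1:ℝ)).indicator (hsmeas r)
  have hXmean : ∀ r, ∫ ω, X r ω ∂μ = ρ := by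
    intro r
    rw [show (fun ω => X r ω) = X r from rfl, hXind r]
    rw [MeasureTheory.integral_indicator_const (1:ℝ) (hsmeas r), measureReal_def, hXprob r]
    simp [ENNReal.toReal_ofReal hρ0.le]
  -- mgf of each Y r
  have hmgf : ∀ r, mgf (Y r) μ t = 1 - ρ + ρ * Real.exp (t * a r) := by
    intro r
    have : (fun ω => Real.exp (t * Y r ω)) = fun ω => 1 + (Real.exp (t * a r) - 1) * X r ω :=
      funext (hpt r)
    rw [mgf, this]
    rw [integral_add (integrable_const 1) ((hXint r).const_mul _), integral_const,
      integral_const_mul, hXmean r]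
    simp only [probReal_univ, measure_univ, ENNReal.toReal_one, smul_eq_mul, mul_one]
    ring
  have hYint : ∀ r, Integrable (fun ω => Real.exp (t * Y r ω)) μ := by
    intro r
    have : (fun ω => Real.exp (t * Y r ω)) = fun ω => 1 + (Real.exp (t * a r) - 1) * X r ω :=
      funext (hpt r)
    rw [this]
    exact (integrable_const 1).add ((hXint r).const_mul _)
  -- event inclusion
  have hsub : {ω | ∑ r : ι, X r ω * s₁ r < ∑ r : ι, X r ω * s₂ r}
      ⊆ {ω | (∑ r : ι, Y r) ω ≤ 0} := by
    intro ω hω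
    simp only [Set.mem_setOf_eq] at hω ⊢
    have hsum : (∑ r : ι, Y r) ω = ∑ r : ι, X r ω * s₁ r - ∑ r : ι, X r ω * s₂ r := by
      simp only [Finset.sum_apply, hYdef, hadef, mul_sub]
      rw [Finset.sum_sub_distrib]
    rw [hsum]
    linarith
  have hintsum : Integrable (fun ω => Real.exp (t * (∑ r : ι, Y r) ω)) μ :=
    ProbabilityTheory.iIndepFun.integrable_exp_mul_sum hYindep hYmeas
      (fun r _ => hYint r)
  have hchern := ProbabilityTheory.measure_le_le_exp_mul_mgf (X := ∑ r : ι, Y r)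
    (0:ℝ) ht hintsum
  have hmono : (μ {ω | ∑ r : ι, X r ω * s₁ r < ∑ r : ι, X r ω * s₂ r}).toReal
      ≤ (μ {ω | (∑ r : ι, Y r) ω ≤ 0}).toReal :=
    ENNReal.toReal_mono (measure_ne_top μ _) (measure_mono hsub)
  have hmgfsum : mgf (∑ r : ι, Y r) μ t = ∏ r : ι, mgf (Y r) μ t :=
    hYindep.mgf_sum hYmeas Finset.univ
  -- bound the product
  have hprod : ∏ r : ι, mgf (Y r) μ t
      ≤ Real.exp (∑ r : ι, (ρ * (t * a r) + (t * a r) ^ 2 / 8)) := by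
    rw [Real.exp_sum]
    refine Finset.prod_le_prod (fun r _ => mgf_nonneg) (fun r _ => ?_)
    rw [hmgf r]
    exact bernoulli_mgf_le ρ hρ0.le hρ1 (t * a r)
  -- exponent arithmetic
  have hsuma : ∑ r : ι, a r = Δ := by
    rw [hΔdef, hadef, ← Finset.sum_sub_distrib]
  have hQ : ∑ r : ι, a r ^ 2 ≤ T ^ 2 := by
    have hstep : ∀ r ∈ Finset.univ, a r ^ 2 ≤ (s₁ r + s₂ r) * T := by
      intro r _
      have hb : s₁ r + s₂ r ≤ T := by
        rw [hTdef, ← Finset.sum_add_distrib]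
        exact Finset.single_le_sum (fun i _ => add_nonneg (hs₁ i) (hs₂ i)) (Finset.mem_univ r)
      have ha2 : a r ^ 2 ≤ (s₁ r + s₂ r) ^ 2 := by
        have har : a r = s₁ r - s₂ r := rfl
        rw [har]
        nlinarith [mul_nonneg (hs₁ r) (hs₂ r)]
      nlinarith [add_nonneg (hs₁ r) (hs₂ r)]
    calc ∑ r : ι, a r ^ 2 ≤ ∑ r : ι, (s₁ r + s₂ r) * T := Finset.sum_le_sum hstep
      _ = T ^ 2 := by rw [← Finset.sum_mul, Finset.sum_add_distrib, ← hTdef]; ring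
  have hexp : ∑ r : ι, (ρ * (t * a r) + (t * a r) ^ 2 / 8)
      ≤ -2 * (Δ / T) ^ 2 * ρ ^ 2 := by
    have hlhs : ∑ r : ι, (ρ * (t * a r) + (t * a r) ^ 2 / 8)
        = ρ * t * Δ + t ^ 2 / 8 * ∑ r : ι, a r ^ 2 := by
      rw [Finset.sum_add_distrib, ← hsuma, Finset.mul_sum, Finset.mul_sum]
      congr 1
      · exact Finset.sum_congr rfl fun r _ => by ring
      · exact Finset.sum_congr rfl fun r _ => by ring
    rw [hlhs]
    have h1 : ρ * t * Δ + t ^ 2 / 8 * ∑ r : ι, a r ^ 2 ≤ ρ * t * Δ + t ^ 2 / 8 * T ^ 2 := by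
      have h0 : (0:ℝ) ≤ t ^ 2 / 8 := by positivity
      have := mul_le_mul_of_nonneg_left hQ h0
      linarith
    have h2 : ρ * t * Δ + t ^ 2 / 8 * T ^ 2 = -2 * (Δ / T) ^ 2 * ρ ^ 2 := by
      have hT0 : T ≠ 0 := hTpos.ne'
      rw [htdef]
      field_simp
      ring
    linarith
  calc (μ {ω | ∑ r : ι, X r ω * s₁ r < ∑ r : ι, X r ω * s₂ r}).toReal
      ≤ (μ {ω | (∑ r : ι, Y r) ω ≤ 0}).toReal := hmono
    _ ≤ Real.exp (-t * 0) * mgf (∑ r : ι, Y r) μ t := hchern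
    _ = mgf (∑ r : ι, Y r) μ t := by simp
    _ = ∏ r : ι, mgf (Y r) μ t := hmgfsum
    _ ≤ Real.exp (∑ r : ι, (ρ * (t * a r) + (t * a r) ^ 2 / 8)) := hprod
    _ ≤ Real.exp (-2 * (Δ / T) ^ 2 * ρ ^ 2) := Real.exp_le_exp.2 hexp
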